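/- Let α>1, 0<ε<1, and u≥0 be real. Then exp(α(1−ε)u) ≤ (1−(1−ε)^{α/(α−1)})^{−(α−1)} · Σ_{n=0}^{∞} u^{αn}/(n!)^α. -/

import Mathlib

open scoped BigOperators

/-- `exp(α(1−ε)u) ≤ (1−(1−ε)^{α/(α−1)})^{−(α−1)} · Σ_{n} u^{αn}/(n!)^α`. -/
theorem exp_le_holder_gevrey_series {α ε u : ℝ} (hα : 1 < α)
    (hε0 : 0 < ε) (hε1 : ε < 1) (hu : 0 ≤ u) :
    Real.exp (α * (1 - ε) * u) ≤
      (1 - (1 - ε) ^ (α / (α - 1))) ^ (-(α - 1)) *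
        ∑' n : ℕ, u ^ (α * n) / (Nat.factorial n : ℝ) ^ α := by
  have hα0 : (0:ℝ) < α := lt_trans one_pos hα
  have hα1 : (0:ℝ) < α - 1 := by linarith
  set q : ℝ := α / (α - 1) with hq
  have hq1 : 1 < q := (one_lt_div hα1).mpr (by linarith)
  have hq0 : 0 < q := lt_trans one_pos hq1
  have hpq : α.HolderConjugate q := (Real.holderConjugate_iff_eq_conjExponent hα).mpr hq
  have hδ0 : (0:ℝ) < 1 - ε := by linarith
  have hδ1 : 1 - ε < 1 := by linarith
  set r : ℝ := (1 - ε) ^ q with hr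
  have hr0 : 0 ≤ r := Real.rpow_nonneg hδ0.le q
  have hr1 : r < 1 := Real.rpow_lt_one hδ0.le hδ1 hq0
  set f : ℕ → ℝ := fun n => u ^ n / (Nat.factorial n : ℝ) with hf
  set g : ℕ → ℝ := fun n => (1 - ε) ^ n with hg
  have hfnn : ∀ n, 0 ≤ f n := fun n =>
    div_nonneg (pow_nonneg hu n) (Nat.cast_nonneg _)
  have hgnn : ∀ n, 0 ≤ g n := fun n => pow_nonneg hδ0.le n
  have hfα : ∀ n : ℕ, f n ^ α = u ^ (α * (n:ℝ)) / (Nat.factorial n : ℝ) ^ α := by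
    intro n
    rw [hf]
    rw [Real.div_rpow (pow_nonneg hu n) (Nat.cast_nonneg _),
      ← Real.rpow_natCast u n, ← Real.rpow_mul hu, mul_comm (n:ℝ) α]
  have hgq : ∀ n : ℕ, g n ^ q = r ^ n := by
    intro n
    show ((1-ε)^n)^q = ((1-ε)^q)^n
    rw [← Real.rpow_natCast (1-ε) n, ← Real.rpow_mul hδ0.le,
      ← Real.rpow_natCast ((1-ε)^(q:ℝ)) n, ← Real.rpow_mul hδ0.le, mul_comm]
  -- summability
  have hfac1 : ∀ n : ℕ, (1:ℝ) ≤ (Nat.factorial n : ℝ) := fun n => by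
    exact_mod_cast Nat.one_le_iff_ne_zero.mpr (Nat.factorial_ne_zero n)
  have hsumf : Summable fun n => f n ^ α := by
    apply Summable.of_nonneg_of_le (fun n => Real.rpow_nonneg (hfnn n) α)
      (fun n => ?_) (Real.summable_pow_div_factorial (u ^ α))
    rw [hfα n]
    have h1 : u ^ (α * (n:ℝ)) = (u ^ α) ^ n := by
      rw [← Real.rpow_natCast (u ^ α) n, ← Real.rpow_mul hu]
    rw [h1]
    apply div_le_div_of_nonneg_left ?_ ?_ ?_
    · positivity
    · exact lt_of_lt_of_le one_pos (hfac1 n)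
    · calc (Nat.factorial n : ℝ) = (Nat.factorial n : ℝ) ^ (1:ℝ) := (Real.rpow_one _).symm
        _ ≤ (Nat.factorial n : ℝ) ^ α := Real.rpow_le_rpow_of_exponent_le (hfac1 n) hα.le
  have hsumg : Summable fun n => g n ^ q := by
    simp only [hgq]
    exact summable_geometric_of_lt_one hr0 hr1
  -- Hölder
  have hhold := Real.inner_le_Lp_mul_Lq_tsum_of_nonneg hpq hfnn hgnn hsumf hsumg
  have hexp : Real.exp ((1 - ε) * u) = ∑' n, f n * g n := by
    rw [Real.exp_eq_exp_ℝ, NormedSpace.exp_eq_tsum_div]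
    refine tsum_congr fun n => ?_
    show ((1-ε)*u)^n / _ = (u^n/_) * (1-ε)^n
    rw [mul_pow, div_mul_eq_mul_div, mul_comm]
  have hSg : ∑' n, g n ^ q = (1 - r)⁻¹ := by
    simp only [hgq]; exact tsum_geometric_of_lt_one hr0 hr1
  set S : ℝ := ∑' n, f n ^ α with hS
  have hS0 : 0 ≤ S := tsum_nonneg fun n => Real.rpow_nonneg (hfnn n) α
  have hkey : Real.exp ((1 - ε) * u) ≤ S ^ (1/α) * ((1 - r)⁻¹) ^ (1/q) := by
    rw [hexp]; rw [hSg] at hhold; exact hhold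
  -- raise to power α
  have hmain : Real.exp (α * (1 - ε) * u) ≤ (S ^ (1/α) * ((1 - r)⁻¹) ^ (1/q)) ^ α := by
    have : Real.exp (α * (1 - ε) * u) = Real.exp ((1 - ε) * u) ^ α := by
      rw [← Real.exp_mul]; ring_nf
    rw [this]
    exact Real.rpow_le_rpow (Real.exp_pos _).le hkey hα0.le
  refine hmain.trans (le_of_eq ?_)
  have h1r : (0:ℝ) < 1 - r := by linarith
  have e1 : (S ^ (1/α)) ^ α = S := by
    rw [← Real.rpow_mul hS0, one_div_mul_cancel hα0.ne', Real.rpow_one]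
  have e2 : (((1 - r)⁻¹) ^ (1/q)) ^ α = (1 - r) ^ (-(α - 1)) := by
    rw [← Real.rpow_mul (inv_nonneg.mpr h1r.le)]
    have hqα : 1/q * α = α - 1 := by
      rw [hq]; field_simp
    rw [hqα, Real.inv_rpow h1r.le, ← Real.rpow_neg h1r.le]
  rw [Real.mul_rpow (Real.rpow_nonneg hS0 _)
      (Real.rpow_nonneg (inv_nonneg.mpr h1r.le) _), e1, e2, mul_comm]
  congr 1
  exact tsum_congr hfα
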